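/- Let X be a simplicial set, G a simplicial group, and τ : X_{>0} → G a twisting function. Let n ≥ 0, 0 ≤ p ≤ n, x ∈ X_n, i ∈ S_{n+1}, and set (j, q) = Φ(i, p+1). Then hatSz_i(s_p x) = s_q(hatSz_j x) in (X ×_τ G)_{n+1}. -/

import Mathlib

open CategoryTheory Simplicial

/-- `memS n l i` means `i ∈ S_{n,l}`: a sequence of length `l` with
`0 ≤ i_s ≤ n - s` for `1 ≤ s ≤ l` (here `i.getD t 0` is the entry `i_{t+1}`). -/
def memS (n l : ℕ) (i : List ℕ) : Prop :=
  i.length = l ∧ ∀ t < l, i.getD t 0 + t + 1 ≤ n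

/-- The ordered set remaining from `{0, …, n}` after performing the first `r`
removal steps prescribed by `i`: at each step the element at (0-indexed)
position `i_r + 1` of the remaining set is removed. -/
def restAfter (n : ℕ) (i : List ℕ) (r : ℕ) : List ℕ :=
  (i.take r).foldl (fun L a => L.eraseIdx (a + 1)) (List.range (n + 1))

/-- The ordered set remaining from `{0, …, n}` after the whole removal
procedure prescribed by `i`. -/
def restList (n : ℕ) (i : List ℕ) : List ℕ := restAfter n i i.length

/-- The element `e_{r+1}` removed at (0-indexed) step `r` of the removal
procedure on `{0, …, n}` prescribed by `i`. -/
def elemRemoved (n : ℕ) (i : List ℕ) (r : ℕ) : ℕ :=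
  (restAfter n i r).getD (i.getD r 0 + 1) 0

/-- The component `α_s` of `Ψ_p(i)`, for the interval `(a, b) = (p_{s-1}, p_s)`:
the set of (0-indexed) steps at which an element strictly between `a` and `b`
is removed. -/
def psiAlpha (n : ℕ) (i : List ℕ) (a b : ℕ) : Finset ℕ :=
  (Finset.range i.length).filter
    (fun r => a < elemRemoved n i r ∧ elemRemoved n i r < b)

/-- The component `j_s` of `Ψ_p(i)`, for the interval `(a, b) = (p_{s-1}, p_s)`:
its `u`-th entry is `w - 1` where the `u`-th element of `(a, b)` to be removed
is, at the moment of its removal, the `w`-th smallest element of `(a, b)` still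
present. -/
def psiJ (n : ℕ) (i : List ℕ) (a b : ℕ) : List ℕ :=
  ((List.range i.length).filter
      (fun r => decide (a < elemRemoved n i r ∧ elemRemoved n i r < b))).map
    (fun r => ((restAfter n i r).filter
      (fun y => decide (a < y ∧ y < elemRemoved n i r))).length)

/-- `α` is a `(q_0, …, q_{k-1})`-shuffle: an ordered partition of
`{0, …, q_0 + ⋯ + q_{k-1} - 1}` with `|α_s| = q_s`. -/
def IsShuffleF {k : ℕ} (q : Fin k → ℕ) (α : Fin k → Finset ℕ) : Prop :=
  (∀ s, (α s).card = q s) ∧ (∀ s t, s ≠ t → Disjoint (α s) (α t)) ∧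
    Finset.univ.biUnion α = Finset.range (∑ s, q s)

/-- The sign exponent `(α)` of a shuffle: the number of pairs `(a, b)` with
`a ∈ α_s`, `b ∈ α_t`, `s < t` and `a > b`. -/
def shuffleExpN (k : ℕ) (α : ℕ → Finset ℕ) : ℕ :=
  ∑ s ∈ Finset.range k, ∑ t ∈ Finset.range k,
    if s < t then ∑ a ∈ α s, ((α t).filter (fun b => b < a)).card else 0

/-- Vertex map of the derived operator. -/
def derivedFun (f : ℕ → ℕ) : ℕ → ℕ := fun t => if t = 0 then 0 else f (t - 1) + 1

/-- Vertex map of the face map `δ_j`. -/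
def deltaFun (j : ℕ) : ℕ → ℕ := fun t => if t < j then t else t + 1

/-- Vertex map of the degeneracy map `σ_j`. -/
def sigmaFun (j : ℕ) : ℕ → ℕ := fun t => if t ≤ j then t else t - 1

/-- Vertex map of the Szczarba operator `D_i^k`. -/
def DFun : List ℕ → ℕ → ℕ → ℕ := fun x x_1 => match x, x_1 with
  | [], _ => id
  | (i1 :: i'), k =>
    if k < i1 then deltaFun (i1 - k) ∘ sigmaFun 0 ∘ derivedFun (DFun i' k)
    else if k = i1 then derivedFun (DFun i' k)
    else sigmaFun 0 ∘ derivedFun (DFun i' (k - 1))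

/-- The morphism `[b] ⟶ [a]` in the simplex category whose vertex map is (the
monotone clamped version of) `f`.  When `f` is monotone and maps `[b]` into `[a]`
this is exactly the morphism with vertex map `f`. -/
def mkHomF (a b : ℕ) (f : ℕ → ℕ) : (SimplexCategory.mk b ⟶ SimplexCategory.mk a) :=
  SimplexCategory.mkHom
    { toFun := fun t => ⟨min ((Finset.range (t.1 + 1)).sup f) a,
        Nat.lt_succ_of_le (min_le_right _ _)⟩
      monotone' := fun u v huv => by
        simp only [Fin.mk_le_mk]
        exact min_le_min
          (Finset.sup_mono (Finset.range_subset_range.mpr (Nat.succ_le_succ huv))) le_rfl }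

/-- The natural simplicial operator `X_a → X_b` with vertex map `f : [b] → [a]`. -/
def simpOp (X : SSet) (f : ℕ → ℕ) (a b : ℕ) (x : X _⦋a⦌) : X _⦋b⦌ :=
  X.map (mkHomF a b f).op x

/-- The natural simplicial operator `G_a → G_b` with vertex map `f : [b] → [a]`,
for a simplicial group `G`. -/
def grpOp (G : CategoryTheory.SimplicialObject GrpCat) (f : ℕ → ℕ) (a b : ℕ)
    (g : G _⦋a⦌) : G _⦋b⦌ :=
  (G.map (mkHomF a b f).op) g

/-- A twisting function `τ : X_{>0} → G`. -/
structure TwistingFn (X : SSet) (G : CategoryTheory.SimplicialObject GrpCat) where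
  map : ∀ n : ℕ, X _⦋n + 1⦌ → G _⦋n⦌
  d0 : ∀ (n : ℕ) (x : X _⦋n + 2⦌),
    grpOp G (deltaFun 0) (n + 1) n (map (n + 1) x)
      = (map n (simpOp X (deltaFun 0) (n + 2) (n + 1) x))⁻¹
        * map n (simpOp X (deltaFun 1) (n + 2) (n + 1) x)
  dk : ∀ (n k : ℕ) (x : X _⦋n + 2⦌), 0 < k → k < n + 2 →
    grpOp G (deltaFun k) (n + 1) n (map (n + 1) x)
      = map n (simpOp X (deltaFun (k + 1)) (n + 2) (n + 1) x)
  sk : ∀ (n k : ℕ) (x : X _⦋n + 1⦌), k < n + 1 →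
    grpOp G (sigmaFun k) n (n + 1) (map n x)
      = map (n + 1) (simpOp X (sigmaFun (k + 1)) (n + 1) (n + 2) x)
  s0 : ∀ (n : ℕ) (x : X _⦋n⦌), map n (simpOp X (sigmaFun 0) n (n + 1) x) = 1

/-- Szczarba's operator `Sz_i : X_{n+1} → G_n`. -/
def Sz {X : SSet} {G : CategoryTheory.SimplicialObject GrpCat} (τ : TwistingFn X G)
    (n : ℕ) (i : List ℕ) (x : X _⦋n + 1⦌) : G _⦋n⦌ :=
  ((List.range (n + 1)).map (fun r =>
    grpOp G (DFun i r) (n - r) n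
      ((τ.map (n - r) (simpOp X (fun t => t + r) (n + 1) ((n - r) + 1) x))⁻¹))).prod

/-- The group component of the operator `hatSz_i : X_n → X_n × G_n`. -/
def hatSzG {X : SSet} {G : CategoryTheory.SimplicialObject GrpCat} (τ : TwistingFn X G)
    (n : ℕ) (i : List ℕ) (x : X _⦋n⦌) : G _⦋n⦌ :=
  ((List.range n).map (fun r =>
    grpOp G (DFun i (r + 1)) (n - (r + 1)) n
      ((τ.map (n - (r + 1)) (simpOp X (fun t => t + r) n ((n - (r + 1)) + 1) x))⁻¹))).prod

/-- Szczarba's operator `hatSz_i : X_n → (X ×_τ G)_n = X_n × G_n`. -/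
def hatSz {X : SSet} {G : CategoryTheory.SimplicialObject GrpCat} (τ : TwistingFn X G)
    (n : ℕ) (i : List ℕ) (x : X _⦋n⦌) : X _⦋n⦌ × G _⦋n⦌ :=
  (simpOp X (DFun i 0) n n x, hatSzG τ n i x)

/-- The `r`-fold iterate of the zeroth face map of the twisted Cartesian
product `X ×_τ G`. -/
def twD0pow {X : SSet} {G : CategoryTheory.SimplicialObject GrpCat} (τ : TwistingFn X G) :
    (r : ℕ) → (m : ℕ) → X _⦋m + r⦌ × (G _⦋m + r⦌ : Type _) → X _⦋m⦌ × (G _⦋m⦌ : Type _) := fun x x_1 x_2 =>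
    match x, x_1, x_2 with
  | 0, _, z => z
  | r + 1, m, z =>
      twD0pow τ r m
        (simpOp X (deltaFun 0) (m + r + 1) (m + r) z.1,
         τ.map (m + r) z.1 * grpOp G (deltaFun 0) (m + r + 1) (m + r) z.2)

/-- Vertex map of the iterated degeneracy `s_B` on a finite set `B`. -/
def degenFun (B : Finset ℕ) : ℕ → ℕ := fun t => t - (B.filter (fun b => b < t)).card

/-- The map `Φ : S_n × [n] → S_{n-1} × [n-1]`. -/
def Phi : List ℕ → ℕ → List ℕ × ℕ := fun x x_1 => match x, x_1 with
  | [], _ => ([], 0)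
  | (i1 :: i'), p =>
    if p < i1 then ((i1 - 1) :: (Phi i' p).1, (Phi i' p).2 + 1)
    else if p = i1 ∨ p = i1 + 1 then (i', 0)
    else (i1 :: (Phi i' (p - 1)).1, (Phi i' (p - 1)).2 + 1)

namespace SzAux

@[simp] lemma derivedFun_zero (f : ℕ → ℕ) : derivedFun f 0 = 0 := rfl

@[simp] lemma derivedFun_succ (f : ℕ → ℕ) (t : ℕ) : derivedFun f (t + 1) = f t + 1 := by
  simp [derivedFun]

@[simp] lemma sigmaFun_zero (j : ℕ) : sigmaFun j 0 = 0 := by simp [sigmaFun]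

@[simp] lemma sigmaFun_zero_succ (t : ℕ) : sigmaFun 0 (t + 1) = t := by
  simp [sigmaFun]

lemma sigmaFun_succ_succ (q t : ℕ) : sigmaFun (q + 1) (t + 1) = sigmaFun q t + 1 := by
  simp only [sigmaFun]; split_ifs <;> omega

lemma sigmaFun_mono (j : ℕ) : Monotone (sigmaFun j) := by
  intro a b h; simp only [sigmaFun]; split_ifs <;> omega

lemma deltaFun_mono (j : ℕ) : Monotone (deltaFun j) := by
  intro a b h; simp only [deltaFun]; split_ifs <;> omega

lemma derivedFun_mono {f : ℕ → ℕ} (hf : Monotone f) : Monotone (derivedFun f) := by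
  intro a b h
  rcases a with _ | a
  · simp [derivedFun]
  · rcases b with _ | b
    · omega
    · simpa using Nat.succ_le_succ (hf (by omega : a ≤ b))

lemma DFun_mono (i : List ℕ) (k : ℕ) : Monotone (DFun i k) := by
  induction i generalizing k with
  | nil => exact fun a b h => h
  | cons i1 i' ih =>
    by_cases h1 : k < i1
    · simp only [DFun, if_pos h1]
      exact (deltaFun_mono _).comp ((sigmaFun_mono _).comp (derivedFun_mono (ih k)))
    · by_cases h2 : k = i1
      · simp only [DFun, if_neg h1, if_pos h2]
        exact derivedFun_mono (ih k)
      · simp only [DFun, if_neg h1, if_neg h2]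
        exact (sigmaFun_mono _).comp (derivedFun_mono (ih (k - 1)))

@[simp] lemma DFun_zero (i : List ℕ) (k : ℕ) : DFun i k 0 = 0 := by
  induction i generalizing k with
  | nil => rfl
  | cons i1 i' ih =>
    by_cases h1 : k < i1
    · simp only [DFun, if_pos h1, Function.comp_apply, derivedFun_zero, sigmaFun_zero, deltaFun]
      rw [if_pos (by omega : (0:ℕ) < i1 - k)]
    · by_cases h2 : k = i1
      · simp [DFun, if_neg h1, if_pos h2]
      · simp [DFun, if_neg h1, if_neg h2]

lemma DFun_le (i : List ℕ) (k : ℕ) : ∀ t, DFun i k t ≤ t := by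
  induction i generalizing k with
  | nil => exact fun t => le_rfl
  | cons i1 i' ih =>
    intro t
    rcases t with _ | t
    · simp
    by_cases h1 : k < i1
    · simp only [DFun, if_pos h1, Function.comp_apply, derivedFun_succ, sigmaFun_zero_succ,
        deltaFun]
      have := ih k t
      split_ifs <;> omega
    · by_cases h2 : k = i1
      · simp only [DFun, if_neg h1, if_pos h2, derivedFun_succ]
        have := ih k t; omega
      · simp only [DFun, if_neg h1, if_neg h2, Function.comp_apply, derivedFun_succ,
          sigmaFun_zero_succ]
        have := ih (k-1) t; omega

lemma memS_cons {N : ℕ} {i1 : ℕ} {i' : List ℕ} (h : memS (N + 1) (N + 1) (i1 :: i')) :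
    i1 + 1 ≤ N + 1 ∧ memS N N i' := by
  obtain ⟨hlen, hval⟩ := h
  refine ⟨by simpa using hval 0 (by omega), ?_, ?_⟩
  · simpa using hlen
  · intro t ht
    have h2 := hval (t + 1) (by omega)
    rw [List.getD_cons_succ] at h2
    omega

lemma DFun_bound (i : List ℕ) (k : ℕ) (N : ℕ) (hmem : memS N N i) (hk : k ≤ N) :
    ∀ t ≤ N, DFun i k t ≤ N - k := by
  induction i generalizing k N with
  | nil =>
    intro t ht
    have : N = 0 := by simpa using hmem.1.symm
    subst this
    simpa [DFun] using ht
  | cons i1 i' ih =>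
    intro t ht
    have hN : i'.length + 1 = N := by simpa using hmem.1
    obtain ⟨N', rfl⟩ : ∃ N', N = N' + 1 := ⟨i'.length, by omega⟩
    obtain ⟨hi1, hmem'⟩ := memS_cons hmem
    rcases t with _ | t
    · simp
    by_cases h1 : k < i1
    · have hb := ih k N' hmem' (by omega) t (by omega)
      simp only [DFun, if_pos h1, Function.comp_apply, derivedFun_succ, sigmaFun_zero_succ,
        deltaFun]
      split_ifs <;> omega
    · by_cases h2 : k = i1
      · have hb := ih k N' hmem' (by omega) t (by omega)
        simp only [DFun, if_neg h1, if_pos h2, derivedFun_succ]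
        omega
      · have hb := ih (k - 1) N' hmem' (by omega) t (by omega)
        simp only [DFun, if_neg h1, if_neg h2, Function.comp_apply, derivedFun_succ,
          sigmaFun_zero_succ]
        omega

end SzAux
namespace SzAux

lemma phiAB : ∀ (i : List ℕ) (P : ℕ), 1 ≤ P → P ≤ i.length → memS i.length i.length i →
    (Phi i P).1.length + 1 = i.length ∧ (Phi i P).2 + 1 ≤ i.length ∧
    (∀ k t, k < P → sigmaFun (P - 1 - k) (DFun i k t)
        = DFun (Phi i P).1 k (sigmaFun (Phi i P).2 t)) ∧
    (∀ k t, P < k → DFun i k t = DFun (Phi i P).1 (k - 1) (sigmaFun (Phi i P).2 t)) := by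
  intro i
  induction i with
  | nil => intro P h1 h2 _; simp at h2; omega
  | cons i1 i' ih =>
    intro P hP1 hP2 hmem
    have hN : (i1 :: i').length = i'.length + 1 := by simp
    rw [hN] at hmem
    obtain ⟨hi1, hmem'⟩ := memS_cons hmem
    by_cases h1 : P < i1
    · -- Case 1 : P < i1
      obtain ⟨ihlen, ihq, ihA, ihB⟩ := ih P hP1 (by omega) hmem'
      simp only [Phi, if_pos h1]
      refine ⟨by simp; omega, by simp; omega, ?_, ?_⟩
      · -- (A)
        intro k t hk
        rcases t with _ | t
        · simp
        simp only [DFun, if_pos (show k < i1 by omega), if_pos (show k < i1 - 1 by omega),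
          Function.comp_apply, derivedFun_succ, sigmaFun_zero_succ, sigmaFun_succ_succ,
          ← ihA k t hk]
        generalize DFun i' k t = v
        simp only [sigmaFun, deltaFun]; split_ifs <;> omega
      · -- (B)
        intro k t hk
        rcases t with _ | t
        · simp
        rcases lt_trichotomy k i1 with hki | hki | hki
        · simp only [DFun, if_pos hki, if_pos (show k - 1 < i1 - 1 by omega),
            Function.comp_apply, derivedFun_succ, sigmaFun_zero_succ, sigmaFun_succ_succ,
            show i1 - 1 - (k - 1) = i1 - k from by omega, ← ihB k t hk]
        · simp only [DFun, if_neg (show ¬ k < i1 by omega), if_pos hki,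
            if_neg (show ¬ k - 1 < i1 - 1 by omega), if_pos (show k - 1 = i1 - 1 by omega),
            derivedFun_succ, sigmaFun_succ_succ, ← ihB k t hk]
        · simp only [DFun, if_neg (show ¬ k < i1 by omega), if_neg (show ¬ k = i1 by omega),
            if_neg (show ¬ k - 1 < i1 - 1 by omega), if_neg (show ¬ k - 1 = i1 - 1 by omega),
            Function.comp_apply, derivedFun_succ, sigmaFun_zero_succ, sigmaFun_succ_succ]
          rw [ihB (k - 1) t (by omega), show k - 1 - 1 = k - 2 by omega]
    · by_cases h2 : P = i1 ∨ P = i1 + 1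
      · -- Case 2
        simp only [Phi, if_neg h1, if_pos h2]
        refine ⟨by simp, by simp only [List.length_cons]; omega, ?_, ?_⟩
        · -- (A)
          intro k t hk
          rcases t with _ | t
          · simp
          rcases lt_or_eq_of_le (show k ≤ i1 by omega) with hki | hki
          · simp only [DFun, if_pos hki, Function.comp_apply, derivedFun_succ,
              sigmaFun_zero_succ]
            generalize DFun i' k t = v
            simp only [sigmaFun, deltaFun]; split_ifs <;> omega
          · have hPk : P = i1 + 1 := by omega
            simp only [DFun, if_neg (show ¬ k < i1 by omega), if_pos hki, derivedFun_succ,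
              sigmaFun_zero_succ, show P - 1 - k = 0 by omega]
        · -- (B)
          intro k t hk
          rcases t with _ | t
          · simp
          simp only [DFun, if_neg (show ¬ k < i1 by omega), if_neg (show ¬ k = i1 by omega),
            Function.comp_apply, derivedFun_succ, sigmaFun_zero_succ]
      · -- Case 3 : i1 + 1 < P
        have h3 : i1 + 1 < P := by omega
        obtain ⟨ihlen, ihq, ihA, ihB⟩ := ih (P - 1) (by omega) (by omega) hmem'
        simp only [Phi, if_neg h1, if_neg h2]
        refine ⟨by simp; omega, by simp; omega, ?_, ?_⟩
        · -- (A)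
          intro k t hk
          rcases t with _ | t
          · simp
          rcases lt_trichotomy k i1 with hki | hki | hki
          · have hIH := ihA k (sigmaFun (Phi i' (P - 1)).2 t) (by omega)
            simp only [DFun, if_pos hki, Function.comp_apply, derivedFun_succ,
              sigmaFun_zero_succ, sigmaFun_succ_succ, ← ihA k t (by omega),
              show P - 1 - 1 - k = P - 2 - k by omega]
            generalize DFun i' k t = v
            simp only [sigmaFun, deltaFun]; split_ifs <;> omega
          · simp only [DFun, if_neg (show ¬ k < i1 by omega), if_pos hki, derivedFun_succ,
              sigmaFun_succ_succ, ← ihA k t (by omega),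
              show P - 1 - 1 - k = P - 2 - k by omega, show P - 1 - k = P - 2 - k + 1 by omega]
          · simp only [DFun, if_neg (show ¬ k < i1 by omega), if_neg (show ¬ k = i1 by omega),
              Function.comp_apply, derivedFun_succ, sigmaFun_zero_succ, sigmaFun_succ_succ]
            rw [← ihA (k - 1) t (by omega), show P - 1 - 1 - (k - 1) = P - 1 - k by omega]
        · -- (B)
          intro k t hk
          rcases t with _ | t
          · simp
          simp only [DFun, if_neg (show ¬ k < i1 by omega), if_neg (show ¬ k = i1 by omega),
            if_neg (show ¬ k - 1 < i1 by omega), if_neg (show ¬ k - 1 = i1 by omega),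
            Function.comp_apply, derivedFun_succ, sigmaFun_zero_succ, sigmaFun_succ_succ]
          rw [ihB (k - 1) t (by omega), show k - 1 - 1 = k - 2 by omega]

end SzAux
namespace SzAux

lemma sup_range_monotone {f : ℕ → ℕ} (hf : Monotone f) (t : ℕ) :
    (Finset.range (t + 1)).sup f = f t := by
  apply le_antisymm
  · exact Finset.sup_le fun u hu => hf (Nat.lt_succ_iff.mp (Finset.mem_range.mp hu))
  · exact Finset.le_sup (Finset.mem_range.mpr (Nat.lt_succ_self t))

lemma mkHomF_apply {f : ℕ → ℕ} (hf : Monotone f) (a b : ℕ) (t : Fin (b + 1)) :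
    (((mkHomF a b f).toOrderHom t) : ℕ) = min (f t.1) a := by
  show (min ((Finset.range (t.1 + 1)).sup f) a) = _
  rw [sup_range_monotone hf]

lemma mkHomF_congr (a b : ℕ) {f g : ℕ → ℕ} (h : ∀ t ≤ b, f t = g t) :
    mkHomF a b f = mkHomF a b g := by
  apply SimplexCategory.Hom.ext
  apply OrderHom.ext
  funext t
  apply Fin.ext
  have ht : t.1 ≤ b := by
    have := t.2
    simp only [SimplexCategory.len_mk] at this
    omega
  show (min ((Finset.range (t.1 + 1)).sup f) a) = (min ((Finset.range (t.1 + 1)).sup g) a)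
  congr 1
  refine Finset.sup_congr rfl fun u hu => ?_
  exact h u (by have := Finset.mem_range.mp hu; omega)

lemma mkHomF_comp (a b c : ℕ) {f g : ℕ → ℕ} (hf : Monotone f) (hg : Monotone g)
    (hgb : ∀ t ≤ c, g t ≤ b) :
    mkHomF b c g ≫ mkHomF a b f = mkHomF a c (f ∘ g) := by
  apply SimplexCategory.Hom.ext
  apply OrderHom.ext
  funext t
  apply Fin.ext
  have ht : t.1 ≤ c := by
    have := t.2
    simp only [SimplexCategory.len_mk] at this
    omega
  have h1 : (((mkHomF b c g).toOrderHom t) : ℕ) = g t.1 := by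
    rw [mkHomF_apply hg]
    exact min_eq_left (hgb t.1 ht)
  have h2 : ((((mkHomF b c g ≫ mkHomF a b f)).toOrderHom t) : ℕ)
      = (((mkHomF a b f).toOrderHom ((mkHomF b c g).toOrderHom t)) : ℕ) := rfl
  rw [h2, mkHomF_apply hf, h1, mkHomF_apply (hf.comp hg)]
  simp only [Function.comp_apply]

lemma simpOp_simpOp (X : SSet) {f g : ℕ → ℕ} {a b c : ℕ} (hf : Monotone f) (hg : Monotone g)
    (hgb : ∀ t ≤ c, g t ≤ b) (x : X _⦋a⦌) :
    simpOp X g b c (simpOp X f a b x) = simpOp X (f ∘ g) a c x := by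
  rw [simpOp, simpOp, simpOp, ← mkHomF_comp a b c hf hg hgb, CategoryTheory.op_comp,
    X.map_comp]
  rfl

lemma grpOp_grpOp (G : CategoryTheory.SimplicialObject GrpCat) {f g : ℕ → ℕ} {a b c : ℕ}
    (hf : Monotone f) (hg : Monotone g)
    (hgb : ∀ t ≤ c, g t ≤ b) (x : G _⦋a⦌) :
    grpOp G g b c (grpOp G f a b x) = grpOp G (f ∘ g) a c x := by
  rw [grpOp, grpOp, grpOp, ← mkHomF_comp a b c hf hg hgb, CategoryTheory.op_comp,
    G.map_comp]
  rfl

lemma simpOp_congr (X : SSet) {f g : ℕ → ℕ} (a b : ℕ) (h : ∀ t ≤ b, f t = g t) (x : X _⦋a⦌) :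
    simpOp X f a b x = simpOp X g a b x := by
  rw [simpOp, simpOp, mkHomF_congr a b h]

lemma grpOp_congr (G : CategoryTheory.SimplicialObject GrpCat) {f g : ℕ → ℕ} (a b : ℕ)
    (h : ∀ t ≤ b, f t = g t) (x : G _⦋a⦌) :
    grpOp G f a b x = grpOp G g a b x := by
  rw [grpOp, grpOp, mkHomF_congr a b h]

lemma grpOp_one (G : CategoryTheory.SimplicialObject GrpCat) (f : ℕ → ℕ) (a b : ℕ) :
    grpOp G f a b 1 = 1 := map_one _

lemma grpOp_inv (G : CategoryTheory.SimplicialObject GrpCat) (f : ℕ → ℕ) (a b : ℕ) (x : G _⦋a⦌) :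
    grpOp G f a b x⁻¹ = (grpOp G f a b x)⁻¹ := map_inv _ _

lemma grpOp_prod (G : CategoryTheory.SimplicialObject GrpCat) (f : ℕ → ℕ) (a b : ℕ)
    (l : List (G _⦋a⦌)) : grpOp G f a b l.prod = (l.map (grpOp G f a b)).prod :=
  map_list_prod _ _

lemma monotone_add (r : ℕ) : Monotone (fun t : ℕ => t + r) := fun a b h => Nat.add_le_add_right h r

end SzAux
namespace SzAux

lemma factor_lt (X : SSet) (G : CategoryTheory.SimplicialObject GrpCat) (τ : TwistingFn X G)
    (n p q r : ℕ) (i j : List ℕ) (x : X _⦋n⦌)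
    (hr : r < p) (hp : p ≤ n) (hq : q ≤ n)
    (hbound : ∀ t ≤ n + 1, DFun i (r + 1) t ≤ n + 1 - (r + 1))
    (hA : ∀ t, sigmaFun (p - r - 1) (DFun i (r + 1) t) = DFun j (r + 1) (sigmaFun q t)) :
    grpOp G (DFun i (r + 1)) (n + 1 - (r + 1)) (n + 1)
        ((τ.map (n + 1 - (r + 1)) (simpOp X (fun t => t + r) (n + 1) ((n + 1 - (r + 1)) + 1)
          (simpOp X (sigmaFun p) n (n + 1) x)))⁻¹)
      = grpOp G (sigmaFun q) n (n + 1) (grpOp G (DFun j (r + 1)) (n - (r + 1)) n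
          ((τ.map (n - (r + 1)) (simpOp X (fun t => t + r) n ((n - (r + 1)) + 1) x))⁻¹)) := by
  have hm : n + 1 - (r + 1) = (n - (r + 1)) + 1 := by omega
  rw [hm]
  set m := n - (r + 1) with hmdef
  rw [simpOp_simpOp X (f := sigmaFun p) (g := fun t => t + r) (a := n) (b := n + 1)
    (c := m + 1 + 1) (sigmaFun_mono p) (monotone_add r)
    (fun t ht => by show t + r ≤ n + 1; omega) x]
  rw [simpOp_congr X (f := sigmaFun p ∘ fun t => t + r)
    (g := (fun t => t + r) ∘ sigmaFun (p - r)) n (m + 1 + 1)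
    (fun t ht => by simp only [Function.comp_apply, sigmaFun]; split_ifs <;> omega) x]
  rw [← simpOp_simpOp X (f := fun t => t + r) (g := sigmaFun (p - r)) (a := n) (b := m + 1)
    (c := m + 1 + 1) (monotone_add r) (sigmaFun_mono (p - r))
    (fun t ht => by simp only [sigmaFun]; split_ifs <;> omega) x]
  have hsk := τ.sk m (p - r - 1) (simpOp X (fun t => t + r) n (m + 1) x) (by omega)
  rw [show p - r - 1 + 1 = p - r from by omega] at hsk
  have hsk' : τ.map (m + 1) (simpOp X (sigmaFun (p - r)) (m + 1) (m + 1 + 1)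
      (simpOp X (fun t => t + r) n (m + 1) x))
      = grpOp G (sigmaFun (p - r - 1)) m (m + 1)
        (τ.map m (simpOp X (fun t => t + r) n (m + 1) x)) := hsk.symm
  rw [hsk', ← grpOp_inv,
    grpOp_grpOp G (f := sigmaFun (p - r - 1)) (g := DFun i (r + 1)) (a := m) (b := m + 1)
      (c := n + 1) (sigmaFun_mono (p - r - 1)) (DFun_mono i (r + 1))
      (fun t ht => by have := hbound t ht; omega)]
  rw [grpOp_grpOp G (f := DFun j (r + 1)) (g := sigmaFun q) (a := m) (b := n) (c := n + 1)
    (DFun_mono j (r + 1)) (sigmaFun_mono q)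
    (fun t ht => by simp only [sigmaFun]; split_ifs <;> omega)]
  exact grpOp_congr G m (n + 1) (fun t _ => by simp only [Function.comp_apply]; exact hA t) _

lemma factor_eq (X : SSet) (G : CategoryTheory.SimplicialObject GrpCat) (τ : TwistingFn X G)
    (n p : ℕ) (i : List ℕ) (x : X _⦋n⦌) (hp : p ≤ n) :
    grpOp G (DFun i (p + 1)) (n + 1 - (p + 1)) (n + 1)
        ((τ.map (n + 1 - (p + 1)) (simpOp X (fun t => t + p) (n + 1) ((n + 1 - (p + 1)) + 1)
          (simpOp X (sigmaFun p) n (n + 1) x)))⁻¹) = 1 := by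
  have hm : n + 1 - (p + 1) = n - p := by omega
  rw [hm]
  set m := n - p with hmdef
  rw [simpOp_simpOp X (f := sigmaFun p) (g := fun t => t + p) (a := n) (b := n + 1)
    (c := m + 1) (sigmaFun_mono p) (monotone_add p)
    (fun t ht => by show t + p ≤ n + 1; omega) x]
  rw [simpOp_congr X (f := sigmaFun p ∘ fun t => t + p)
    (g := (fun t => t + p) ∘ sigmaFun 0) n (m + 1)
    (fun t ht => by simp only [Function.comp_apply, sigmaFun]; split_ifs <;> omega) x]
  rw [← simpOp_simpOp X (f := fun t => t + p) (g := sigmaFun 0) (a := n) (b := m)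
    (c := m + 1) (monotone_add p) (sigmaFun_mono 0)
    (fun t ht => by simp only [sigmaFun]; split_ifs <;> omega) x]
  rw [τ.s0 m (simpOp X (fun t => t + p) n m x), inv_one, grpOp_one]

lemma factor_gt (X : SSet) (G : CategoryTheory.SimplicialObject GrpCat) (τ : TwistingFn X G)
    (n p q s : ℕ) (i j : List ℕ) (x : X _⦋n⦌)
    (hp : p ≤ s) (hs : s < n) (hq : q ≤ n)
    (hB : ∀ t, DFun i (s + 1 + 1) t = DFun j (s + 1) (sigmaFun q t)) :
    grpOp G (DFun i (s + 1 + 1)) (n + 1 - (s + 1 + 1)) (n + 1)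
        ((τ.map (n + 1 - (s + 1 + 1)) (simpOp X (fun t => t + (s + 1)) (n + 1)
          ((n + 1 - (s + 1 + 1)) + 1) (simpOp X (sigmaFun p) n (n + 1) x)))⁻¹)
      = grpOp G (sigmaFun q) n (n + 1) (grpOp G (DFun j (s + 1)) (n - (s + 1)) n
          ((τ.map (n - (s + 1)) (simpOp X (fun t => t + s) n ((n - (s + 1)) + 1) x))⁻¹)) := by
  have hm : n + 1 - (s + 1 + 1) = n - (s + 1) := by omega
  rw [hm]
  set m := n - (s + 1) with hmdef
  rw [simpOp_simpOp X (f := sigmaFun p) (g := fun t => t + (s + 1)) (a := n) (b := n + 1)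
    (c := m + 1) (sigmaFun_mono p) (monotone_add (s + 1))
    (fun t ht => by show t + (s + 1) ≤ n + 1; omega) x]
  rw [simpOp_congr X (f := sigmaFun p ∘ fun t => t + (s + 1)) (g := fun t => t + s) n (m + 1)
    (fun t ht => by simp only [Function.comp_apply, sigmaFun]; split_ifs <;> omega) x]
  rw [grpOp_grpOp G (f := DFun j (s + 1)) (g := sigmaFun q) (a := m) (b := n) (c := n + 1)
    (DFun_mono j (s + 1)) (sigmaFun_mono q)
    (fun t ht => by simp only [sigmaFun]; split_ifs <;> omega)]
  exact grpOp_congr G m (n + 1) (fun t _ => by simp only [Function.comp_apply]; exact hB t) _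

end SzAux

open SzAux

/-- For a twisting function `τ : X_{>0} → G`, `n ≥ 0`,
`0 ≤ p ≤ n`, `x ∈ X_n`, `i ∈ S_{n+1}` and `(j, q) = Φ(i, p+1)` one has
`hatSz_i (s_p x) = s_q (hatSz_j x)` in `(X ×_τ G)_{n+1}` (degeneracies of the
twisted Cartesian product act componentwise). -/
theorem szczarba_hatSz_degeneracy (X : SSet) (G : CategoryTheory.SimplicialObject GrpCat)
    (τ : TwistingFn X G) (n : ℕ) (p : ℕ) (hp : p ≤ n)
    (i : List ℕ) (hi : memS (n + 1) (n + 1) i) (x : X _⦋n⦌) :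
    hatSz τ (n + 1) i (simpOp X (sigmaFun p) n (n + 1) x)
      = (simpOp X (sigmaFun (Phi i (p + 1)).2) n (n + 1) (hatSz τ n (Phi i (p + 1)).1 x).1,
         grpOp G (sigmaFun (Phi i (p + 1)).2) n (n + 1) (hatSz τ n (Phi i (p + 1)).1 x).2) := by
  have hilen : i.length = n + 1 := hi.1
  obtain ⟨hjlen, hqlen, hA, hB⟩ := phiAB i (p + 1) (by omega) (by omega) (by rwa [hilen])
  set j := (Phi i (p + 1)).1 with hjdef
  set q := (Phi i (p + 1)).2 with hqdef
  have hqn : q ≤ n := by omega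
  have hbound : ∀ k ≤ n + 1, ∀ t ≤ n + 1, DFun i k t ≤ n + 1 - k := fun k hk t ht =>
    DFun_bound i k (n + 1) hi hk t ht
  refine Prod.ext ?_ ?_
  · -- first components
    simp only [hatSz]
    rw [simpOp_simpOp X (f := sigmaFun p) (g := DFun i 0) (a := n) (b := n + 1) (c := n + 1)
      (sigmaFun_mono p) (DFun_mono i 0) (fun t ht => (DFun_le i 0 t).trans ht) x]
    rw [simpOp_congr X (f := sigmaFun p ∘ DFun i 0) (g := DFun j 0 ∘ sigmaFun q) n (n + 1)
      (fun t ht => by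
        have h := hA 0 t (by omega)
        rw [show p + 1 - 1 - 0 = p from by omega] at h
        simpa using h) x]
    rw [← simpOp_simpOp X (f := DFun j 0) (g := sigmaFun q) (a := n) (b := n) (c := n + 1)
      (DFun_mono j 0) (sigmaFun_mono q)
      (fun t ht => by simp only [sigmaFun]; split_ifs <;> omega) x]
  · -- second components
    simp only [hatSz, hatSzG]
    rw [grpOp_prod, List.map_map]
    have e1 : List.range (n + 1) = List.range p ++ (List.range (n - p + 1)).map (p + ·) := by
      have h := List.range_add (n := p) (m := n - p + 1)
      rw [show p + (n - p + 1) = n + 1 from by omega] at h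
      exact h
    have e2 : List.range n = List.range p ++ (List.range (n - p)).map (p + ·) := by
      have h := List.range_add (n := p) (m := n - p)
      rw [show p + (n - p) = n from by omega] at h
      exact h
    rw [e1, e2, List.range_succ_eq_map, List.map_cons, List.map_append, List.map_append,
      List.map_cons, List.map_map, List.map_map, List.map_map, List.prod_append,
      List.prod_append, List.prod_cons]
    have c1 : ∀ r ∈ List.range p,
        grpOp G (DFun i (r + 1)) (n + 1 - (r + 1)) (n + 1)
          ((τ.map (n + 1 - (r + 1)) (simpOp X (fun t => t + r) (n + 1) ((n + 1 - (r + 1)) + 1)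
            (simpOp X (sigmaFun p) n (n + 1) x)))⁻¹)
        = grpOp G (sigmaFun q) n (n + 1) (grpOp G (DFun j (r + 1)) (n - (r + 1)) n
            ((τ.map (n - (r + 1)) (simpOp X (fun t => t + r) n ((n - (r + 1)) + 1) x))⁻¹)) := by
      intro r hr
      have hrp : r < p := List.mem_range.mp hr
      refine factor_lt X G τ n p q r i j x hrp hp hqn
        (fun t ht => hbound (r + 1) (by omega) t ht) (fun t => ?_)
      have h := hA (r + 1) t (by omega)
      rwa [show p + 1 - 1 - (r + 1) = p - r - 1 from by omega] at h
    have c3 : ∀ u ∈ List.range (n - p),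
        grpOp G (DFun i (p + u + 1 + 1)) (n + 1 - (p + u + 1 + 1)) (n + 1)
          ((τ.map (n + 1 - (p + u + 1 + 1)) (simpOp X (fun t => t + (p + u + 1)) (n + 1)
            ((n + 1 - (p + u + 1 + 1)) + 1) (simpOp X (sigmaFun p) n (n + 1) x)))⁻¹)
        = grpOp G (sigmaFun q) n (n + 1) (grpOp G (DFun j (p + u + 1)) (n - (p + u + 1)) n
            ((τ.map (n - (p + u + 1)) (simpOp X (fun t => t + (p + u)) n
              ((n - (p + u + 1)) + 1) x))⁻¹)) := by
      intro u hu
      have hun : u < n - p := List.mem_range.mp hu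
      refine factor_gt X G τ n p q (p + u) i j x (by omega) (by omega) hqn (fun t => ?_)
      have h := hB (p + u + 1 + 1) t (by omega)
      rwa [show p + u + 1 + 1 - 1 = p + u + 1 from by omega] at h
    rw [List.map_congr_left c1]
    congr 1
    have c2 := factor_eq X G τ n p i x hp
    simp only [Function.comp_apply, Nat.succ_eq_add_one, Nat.add_zero]
    rw [c2, one_mul]
    refine congrArg List.prod (List.map_congr_left fun u hu => ?_)
    simp only [Function.comp_apply, Nat.succ_eq_add_one]
    rw [show p + (u + 1) = p + u + 1 from by omega]
    exact c3 u hu
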